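/- There is a surjective ℚ-algebra homomorphism φ from A₀ onto the monoid algebra ℚ[M₀] with φ(i) = i and φ(j) = j, and the kernel of φ is the two-sided ideal of A₀ generated by the elements (ij)^m − i^m j^m for m ≥ 1. -/

import Mathlib

open FreeAlgebra

noncomputable section

/-- Defining relations for the specialisation at `q = 0` of the generic composition
algebra of the Kronecker quiver, on generators `i = ι ℚ 0` and `j = ι ℚ 1`:
(1) `i^m j^(m+1) i^(m+1) j^(m+2) = i^(2m+1) j^(2m+3)` for all `m ≥ 0`;
(2) `i^(n+2) j^(n+1) i^(n+1) j^n = i^(2n+3) j^(2n+1)` for all `n ≥ 0`;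
(3) `(i^m j^m)(i^n j^n) = (i^n j^n)(i^m j^m)` for all `m, n ≥ 1`. -/
inductive KroneckerRel0 : FreeAlgebra ℚ (Fin 2) → FreeAlgebra ℚ (Fin 2) → Prop
  | preproj (m : ℕ) :
      KroneckerRel0
        (ι ℚ 0 ^ m * ι ℚ 1 ^ (m + 1) * (ι ℚ 0 ^ (m + 1) * ι ℚ 1 ^ (m + 2)))
        (ι ℚ 0 ^ (2 * m + 1) * ι ℚ 1 ^ (2 * m + 3))
  | preinj (n : ℕ) :
      KroneckerRel0
        (ι ℚ 0 ^ (n + 2) * ι ℚ 1 ^ (n + 1) * (ι ℚ 0 ^ (n + 1) * ι ℚ 1 ^ n))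
        (ι ℚ 0 ^ (2 * n + 3) * ι ℚ 1 ^ (2 * n + 1))
  | deltaComm (m n : ℕ) (hm : 1 ≤ m) (hn : 1 ≤ n) :
      KroneckerRel0
        (ι ℚ 0 ^ m * ι ℚ 1 ^ m * (ι ℚ 0 ^ n * ι ℚ 1 ^ n))
        (ι ℚ 0 ^ n * ι ℚ 1 ^ n * (ι ℚ 0 ^ m * ι ℚ 1 ^ m))

/-- `A₀`, the composition algebra of the Kronecker quiver specialised at `q = 0`,
presented by generators `i, j` and the relations above. -/
abbrev A0 : Type := RingQuot KroneckerRel0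

/-- The generator `i` of `A₀`. -/
def iA : A0 := RingQuot.mkAlgHom ℚ KroneckerRel0 (ι ℚ 0)

/-- The generator `j` of `A₀`. -/
def jA : A0 := RingQuot.mkAlgHom ℚ KroneckerRel0 (ι ℚ 1)

/-- The commutator `ij - ji` in `A₀`. -/
def cA : A0 := iA * jA - jA * iA

/-- `P(m) = (ij - ji)^m j` in `A₀`. -/
def PA (m : ℕ) : A0 := cA ^ m * jA

/-- `I(n) = i (ij - ji)^n` in `A₀`. -/
def IA (n : ℕ) : A0 := iA * cA ^ n

/-- `R(1) = ij - ji` and `R(s+1) = i (ij - ji)^s j` for `s ≥ 1` in `A₀`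
(the value at `0` is junk). -/
def RA : ℕ → A0
  | 0 => 0
  | 1 => cA
  | (s + 2) => iA * cA ^ (s + 1) * jA

/-- `δ_m = i^m j^m` in `A₀`. -/
def deltaA (m : ℕ) : A0 := iA ^ m * jA ^ m

noncomputable section

/-- The generator `i` of the free monoid on two letters. -/
def iF : FreeMonoid (Fin 2) := FreeMonoid.of 0

/-- The generator `j` of the free monoid on two letters. -/
def jF : FreeMonoid (Fin 2) := FreeMonoid.of 1

/-- Defining relations of Reineke's composition monoid of the Kronecker quiver:
(1) `i^m j^(m+1) i^(m+1) j^(m+2) = i^(2m+1) j^(2m+3)` for all `m ≥ 0`;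
(2) `i^(n+2) j^(n+1) i^(n+1) j^n = i^(2n+3) j^(2n+1)` for all `n ≥ 0`;
(3) `(ij)^m = i^m j^m` for all `m ≥ 1`. -/
inductive KroneckerMonoidRel : FreeMonoid (Fin 2) → FreeMonoid (Fin 2) → Prop
  | preproj (m : ℕ) :
      KroneckerMonoidRel
        (iF ^ m * jF ^ (m + 1) * (iF ^ (m + 1) * jF ^ (m + 2)))
        (iF ^ (2 * m + 1) * jF ^ (2 * m + 3))
  | preinj (n : ℕ) :
      KroneckerMonoidRel
        (iF ^ (n + 2) * jF ^ (n + 1) * (iF ^ (n + 1) * jF ^ n))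
        (iF ^ (2 * n + 3) * jF ^ (2 * n + 1))
  | delta (m : ℕ) (hm : 1 ≤ m) :
      KroneckerMonoidRel ((iF * jF) ^ m) (iF ^ m * jF ^ m)

/-- `M₀`, Reineke's composition monoid of the Kronecker quiver, presented by
generators `i, j` and the relations above. -/
abbrev M0 : Type := (conGen KroneckerMonoidRel).Quotient

/-- The generator `i` of `M₀`. -/
def iM : M0 := (iF : M0)

/-- The generator `j` of `M₀`. -/
def jM : M0 := (jF : M0)



/-! ### Auxiliary constructions for the proof -/

/-- The set of elements `(ij)^m - i^m j^m`, `m ≥ 1`, in `A₀`. -/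
def genS : Set A0 := {y : A0 | ∃ m : ℕ, 1 ≤ m ∧ y = (iA * jA) ^ m - iA ^ m * jA ^ m}

/-- The two-sided ideal generated by `genS`. -/
def I0 : TwoSidedIdeal A0 := TwoSidedIdeal.span genS

/-- The quotient ring `A₀ / I₀`. -/
abbrev Q0 : Type := I0.ringCon.Quotient

/-- The quotient map `A₀ → A₀/I₀`. -/
def pi0 : A0 →+* Q0 := I0.ringCon.mk'

lemma pi0_surj : Function.Surjective pi0 := fun x => Quot.inductionOn x fun a => ⟨a, rfl⟩

lemma pi0_eq_zero_iff {x : A0} : pi0 x = 0 ↔ x ∈ I0 := by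
  have h0 : (0 : Q0) = ((0 : A0) : Q0) := rfl
  show (x : Q0) = 0 ↔ _
  rw [h0, RingCon.eq]
  exact Iff.rfl

noncomputable instance : Algebra ℚ Q0 :=
  RingHom.toAlgebra' (pi0.comp (algebraMap ℚ A0)) (by
    intro c x
    obtain ⟨a, rfl⟩ := pi0_surj x
    rw [RingHom.comp_apply, ← map_mul, ← map_mul, Algebra.commutes])

/-- The quotient map as an algebra homomorphism. -/
def pi0a : A0 →ₐ[ℚ] Q0 := { pi0 with commutes' := fun _ => rfl }

lemma pi0a_apply (x : A0) : pi0a x = pi0 x := rfl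

/- Relations in `A₀`. -/
lemma relA_preproj (m : ℕ) :
    iA ^ m * jA ^ (m + 1) * (iA ^ (m + 1) * jA ^ (m + 2)) =
      iA ^ (2 * m + 1) * jA ^ (2 * m + 3) := by
  simp only [iA, jA, ← map_pow, ← map_mul]
  exact RingQuot.mkAlgHom_rel ℚ (KroneckerRel0.preproj m)

lemma relA_preinj (n : ℕ) :
    iA ^ (n + 2) * jA ^ (n + 1) * (iA ^ (n + 1) * jA ^ n) =
      iA ^ (2 * n + 3) * jA ^ (2 * n + 1) := by
  simp only [iA, jA, ← map_pow, ← map_mul]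
  exact RingQuot.mkAlgHom_rel ℚ (KroneckerRel0.preinj n)

/- Relations in `M₀`. -/
lemma coeM_pow (w : FreeMonoid (Fin 2)) (n : ℕ) :
    ((w ^ n : FreeMonoid (Fin 2)) : M0) = (w : M0) ^ n :=
  map_pow (Con.mk' _) w n

lemma relM_preproj (m : ℕ) :
    iM ^ m * jM ^ (m + 1) * (iM ^ (m + 1) * jM ^ (m + 2)) =
      iM ^ (2 * m + 1) * jM ^ (2 * m + 3) := by
  simp only [iM, jM, ← coeM_pow, ← Con.coe_mul]
  exact (Con.eq _).mpr (ConGen.Rel.of _ _ (KroneckerMonoidRel.preproj m))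

lemma relM_preinj (n : ℕ) :
    iM ^ (n + 2) * jM ^ (n + 1) * (iM ^ (n + 1) * jM ^ n) =
      iM ^ (2 * n + 3) * jM ^ (2 * n + 1) := by
  simp only [iM, jM, ← coeM_pow, ← Con.coe_mul]
  exact (Con.eq _).mpr (ConGen.Rel.of _ _ (KroneckerMonoidRel.preinj n))

lemma relM_delta (m : ℕ) (hm : 1 ≤ m) : (iM * jM) ^ m = iM ^ m * jM ^ m := by
  simp only [iM, jM, ← coeM_pow, ← Con.coe_mul]
  exact (Con.eq _).mpr (ConGen.Rel.of _ _ (KroneckerMonoidRel.delta m hm))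

lemma relM_deltaComm (m n : ℕ) (hm : 1 ≤ m) (hn : 1 ≤ n) :
    iM ^ m * jM ^ m * (iM ^ n * jM ^ n) = iM ^ n * jM ^ n * (iM ^ m * jM ^ m) := by
  rw [← relM_delta m hm, ← relM_delta n hn, ← pow_add, ← pow_add, add_comm]

/-- The algebra map from the free algebra to the monoid algebra of `M₀`. -/
def Ff : FreeAlgebra ℚ (Fin 2) →ₐ[ℚ] MonoidAlgebra ℚ M0 :=
  FreeAlgebra.lift ℚ ![MonoidAlgebra.of ℚ M0 iM, MonoidAlgebra.of ℚ M0 jM]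

lemma Ff_i : Ff (ι ℚ 0) = MonoidAlgebra.of ℚ M0 iM := by
  simp [Ff, FreeAlgebra.lift_ι_apply]

lemma Ff_j : Ff (ι ℚ 1) = MonoidAlgebra.of ℚ M0 jM := by
  simp [Ff, FreeAlgebra.lift_ι_apply]

lemma Ff_rel : ∀ ⦃x y : FreeAlgebra ℚ (Fin 2)⦄, KroneckerRel0 x y → Ff x = Ff y := by
  intro x y h
  induction h with
  | preproj m =>
      simp only [map_mul, map_pow, Ff_i, Ff_j]
      simp only [← map_pow (MonoidAlgebra.of ℚ M0), ← map_mul (MonoidAlgebra.of ℚ M0)]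
      exact congrArg _ (relM_preproj m)
  | preinj n =>
      simp only [map_mul, map_pow, Ff_i, Ff_j]
      simp only [← map_pow (MonoidAlgebra.of ℚ M0), ← map_mul (MonoidAlgebra.of ℚ M0)]
      exact congrArg _ (relM_preinj n)
  | deltaComm m n hm hn =>
      simp only [map_mul, map_pow, Ff_i, Ff_j]
      simp only [← map_pow (MonoidAlgebra.of ℚ M0), ← map_mul (MonoidAlgebra.of ℚ M0)]
      exact congrArg _ (relM_deltaComm m n hm hn)

/-- The algebra homomorphism `φ : A₀ → ℚ[M₀]`. -/
def phi0 : A0 →ₐ[ℚ] MonoidAlgebra ℚ M0 := RingQuot.liftAlgHom ℚ ⟨Ff, Ff_rel⟩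

lemma phi0_iA : phi0 iA = MonoidAlgebra.of ℚ M0 iM := by
  rw [iA, phi0, RingQuot.liftAlgHom_mkAlgHom_apply]
  exact Ff_i

lemma phi0_jA : phi0 jA = MonoidAlgebra.of ℚ M0 jM := by
  rw [jA, phi0, RingQuot.liftAlgHom_mkAlgHom_apply]
  exact Ff_j

/-- `genS` is contained in the kernel of `φ`. -/
lemma phi0_genS {y : A0} (hy : y ∈ genS) : phi0 y = 0 := by
  obtain ⟨m, hm, rfl⟩ := hy
  simp only [map_sub, map_mul, map_pow, phi0_iA, phi0_jA]
  simp only [← map_pow (MonoidAlgebra.of ℚ M0), ← map_mul (MonoidAlgebra.of ℚ M0)]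
  rw [relM_delta m hm, sub_self]

/-- The monoid homomorphism from the free monoid to `Q₀`. -/
def g0 : FreeMonoid (Fin 2) →* Q0 := FreeMonoid.lift ![pi0 iA, pi0 jA]

lemma g0_i : g0 iF = pi0 iA := rfl

lemma g0_j : g0 jF = pi0 jA := rfl

lemma pi0_delta (m : ℕ) (hm : 1 ≤ m) : pi0 ((iA * jA) ^ m) = pi0 (iA ^ m * jA ^ m) := by
  rw [← sub_eq_zero, ← map_sub]
  exact pi0_eq_zero_iff.mpr (TwoSidedIdeal.subset_span ⟨m, hm, rfl⟩)

lemma g0_rel : conGen KroneckerMonoidRel ≤ Con.ker g0 := by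
  refine Con.conGen_le.mpr fun x y h => ?_
  show g0 x = g0 y
  induction h with
  | preproj m =>
      simp only [map_mul, map_pow, g0_i, g0_j]
      simp only [← map_pow pi0, ← map_mul pi0]
      exact congrArg _ (relA_preproj m)
  | preinj n =>
      simp only [map_mul, map_pow, g0_i, g0_j]
      simp only [← map_pow pi0, ← map_mul pi0]
      exact congrArg _ (relA_preinj n)
  | delta m hm =>
      simp only [map_mul, map_pow, g0_i, g0_j]
      simp only [← map_pow pi0, ← map_mul pi0]
      exact pi0_delta m hm

/-- The induced monoid homomorphism `M₀ → Q₀`. -/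
def gM : M0 →* Q0 := Con.lift _ g0 g0_rel

/-- The induced algebra homomorphism `ℚ[M₀] → Q₀`. -/
def chi0 : MonoidAlgebra ℚ M0 →ₐ[ℚ] Q0 := MonoidAlgebra.lift ℚ Q0 M0 gM

lemma chi0_phi0 : chi0.comp phi0 = pi0a := by
  refine RingQuot.ringQuot_ext' ℚ _ _ (FreeAlgebra.hom_ext (funext fun k => ?_))
  fin_cases k
  · show chi0 (phi0 (RingQuot.mkAlgHom ℚ KroneckerRel0 (ι ℚ 0))) = pi0a _
    rw [show RingQuot.mkAlgHom ℚ KroneckerRel0 (ι ℚ 0) = iA from rfl, phi0_iA]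
    rw [chi0, MonoidAlgebra.lift_of]
    exact (Con.lift_coe g0_rel iF).trans rfl
  · show chi0 (phi0 (RingQuot.mkAlgHom ℚ KroneckerRel0 (ι ℚ 1))) = pi0a _
    rw [show RingQuot.mkAlgHom ℚ KroneckerRel0 (ι ℚ 1) = jA from rfl, phi0_jA]
    rw [chi0, MonoidAlgebra.lift_of]
    exact (Con.lift_coe g0_rel jF).trans rfl

lemma chi0_phi0_apply (x : A0) : chi0 (phi0 x) = pi0 x := by
  have := congrArg (fun f : A0 →ₐ[ℚ] Q0 => f x) chi0_phi0
  exact this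

lemma of_mem_range (m : M0) : MonoidAlgebra.of ℚ M0 m ∈ phi0.range := by
  induction m using Con.induction_on with
  | H w =>
    induction w using FreeMonoid.inductionOn' with
    | one =>
        rw [Con.coe_one, map_one]
        exact one_mem _
    | of_mul b bs ih =>
        rw [Con.coe_mul, map_mul]
        refine mul_mem ?_ ih
        fin_cases b
        · exact ⟨iA, phi0_iA.symm ▸ rfl⟩
        · exact ⟨jA, phi0_jA.symm ▸ rfl⟩

lemma phi0_surj : Function.Surjective phi0 := by
  intro x
  suffices h : x ∈ phi0.range by exact h
  induction x using MonoidAlgebra.induction_on with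
  | of g => exact of_mem_range g
  | add f g hf hg => exact add_mem hf hg
  | smul r f hf => exact Subalgebra.smul_mem _ hf r

/-- There is a surjective `ℚ`-algebra homomorphism `φ : A₀ → ℚ[M₀]` with
`φ(i) = i` and `φ(j) = j`, whose kernel is the two-sided ideal of `A₀`
generated by the elements `(ij)^m - i^m j^m` for `m ≥ 1`. -/
theorem surjection_onto_composition_monoid_algebra :
    ∃ φ : A0 →ₐ[ℚ] MonoidAlgebra ℚ M0,
      Function.Surjective φ ∧
      φ iA = MonoidAlgebra.of ℚ M0 iM ∧
      φ jA = MonoidAlgebra.of ℚ M0 jM ∧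
      ∀ x : A0, φ x = 0 ↔
        x ∈ TwoSidedIdeal.span
              {y : A0 | ∃ m : ℕ, 1 ≤ m ∧ y = (iA * jA) ^ m - iA ^ m * jA ^ m} := by
  refine ⟨phi0, phi0_surj, phi0_iA, phi0_jA, fun x => ⟨fun h => ?_, fun h => ?_⟩⟩
  · have : pi0 x = 0 := by rw [← chi0_phi0_apply, h, map_zero]
    exact pi0_eq_zero_iff.mp this
  · have hker : x ∈ TwoSidedIdeal.ker phi0 :=
      TwoSidedIdeal.mem_span_iff.mp h (TwoSidedIdeal.ker phi0)
        (fun y hy => (TwoSidedIdeal.mem_ker _).mpr (phi0_genS hy))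
    exact (TwoSidedIdeal.mem_ker _).mp hker
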